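/- Let $N$ be a nonnegative integer, set $\gamma' = N + \tfrac{1}{2}$, and let $i, j$ be integers with $N < j < i$. Define $L_{i0} = 1$ and, for $1 \le j \le i$, $L_{ij} = \binom{i}{j} \frac{\prod_{k=0}^{j-1}(i+\gamma'-k)}{\prod_{k=1}^{j}(k-\gamma')}$. Then $|L_{i(j+1)}| \le |L_{ij}|$ if and only if $2j \ge i - 1 + \gamma'$. -/

import Mathlib

open Finset

/-- The regularizing coefficients `L_{ij}` (odd-dimension case):
`L_{i0} = 1` and for `j ≥ 1`,
`L_{ij} = binom(i,j) ⬝ (∏_{k=0}^{j-1} (i+γ'-k)) / (∏_{k=1}^{j} (k-γ'))`.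
(For `j = 0` both products are empty, yielding `1`.) -/
noncomputable def Lcoef (γ : ℝ) (i j : ℕ) : ℝ :=
  (i.choose j : ℝ) * (∏ k ∈ Finset.range j, ((i : ℝ) + γ - (k : ℝ))) /
    ∏ k ∈ Finset.Icc 1 j, ((k : ℝ) - γ)

theorem abs_Lcoef_succ_le_iff
    (N : ℕ) (γ : ℝ) (hγ : γ = (N : ℝ) + 1 / 2) (i j : ℕ) (hNj : N < j) (hji : j < i) :
    |Lcoef γ i (j + 1)| ≤ |Lcoef γ i j| ↔ (i : ℝ) - 1 + γ ≤ 2 * (j : ℝ) := by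
  have hji' : j + 1 ≤ i := hji
  have hγpos : (0:ℝ) < γ := by rw [hγ]; positivity
  have hden : ∀ k : ℕ, ((k:ℝ) - γ) ≠ 0 := by
    intro k h
    have h2 : ((2*k : ℕ) : ℝ) = ((2*N+1 : ℕ) : ℝ) := by push_cast; rw [hγ] at h; linarith
    have := Nat.cast_inj (R := ℝ).mp h2
    omega
  have hQ : (∏ k ∈ Finset.Icc 1 j, ((k:ℝ) - γ)) ≠ 0 :=
    Finset.prod_ne_zero_iff.mpr (fun k _ => hden k)
  have hP : (∏ k ∈ Finset.range j, ((i : ℝ) + γ - (k : ℝ))) ≠ 0 := by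
    apply Finset.prod_ne_zero_iff.mpr
    intro k hk
    have hk' : k < j := Finset.mem_range.mp hk
    have : (k:ℝ) < (i:ℝ) := by exact_mod_cast lt_trans hk' hji
    exact ne_of_gt (by linarith)
  have hchoose : (0:ℝ) < (i.choose j : ℝ) := by
    exact_mod_cast Nat.choose_pos (le_of_lt hji)
  have hL : Lcoef γ i j ≠ 0 := by
    unfold Lcoef
    exact div_ne_zero (mul_ne_zero (ne_of_gt hchoose) hP) hQ
  -- the recurrence
  have hcast : (i.choose (j+1) : ℝ) * ((j:ℝ)+1) = (i.choose j : ℝ) * ((i:ℝ) - (j:ℝ)) := by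
    have := Nat.choose_succ_right_eq i j
    have h2 : ((i.choose (j+1) * (j+1) : ℕ) : ℝ) = ((i.choose j * (i - j) : ℕ) : ℝ) :=
      congrArg _ this
    push_cast [Nat.cast_sub (le_of_lt hji)] at h2
    linarith
  have hij : (0:ℝ) < (i:ℝ) - (j:ℝ) := by
    have : (j:ℝ) < (i:ℝ) := by exact_mod_cast hji
    linarith
  have hj1 : (0:ℝ) < (j:ℝ) + 1 := by positivity
  have hj1γ : (0:ℝ) < (j:ℝ) + 1 - γ := by
    have : (N:ℝ) < (j:ℝ) := by exact_mod_cast hNj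
    rw [hγ]; linarith
  have hiγj : (0:ℝ) < (i:ℝ) + γ - (j:ℝ) := by linarith
  set r : ℝ := (((i:ℝ) - (j:ℝ)) * ((i:ℝ) + γ - (j:ℝ))) / (((j:ℝ)+1) * ((j:ℝ)+1-γ)) with hr
  have hrpos : 0 < r := by positivity
  have hrec : Lcoef γ i (j+1) = Lcoef γ i j * r := by
    unfold Lcoef
    rw [Finset.prod_range_succ, Finset.prod_Icc_succ_top (Nat.le_add_left 1 j), hr]
    have hj1' : ((j:ℝ)+1) ≠ 0 := ne_of_gt hj1
    have hd : ((j:ℝ)+1-γ) ≠ 0 := ne_of_gt hj1γ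
    push_cast
    field_simp
    linear_combination hcast
  rw [hrec, abs_mul, abs_of_pos hrpos,
    mul_le_iff_le_one_right (abs_pos.mpr hL), hr, div_le_one (by positivity)]
  constructor <;> intro h <;> nlinarith [mul_pos hij hj1, mul_pos hj1 hj1]
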